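/- arXiv:2210.11778 — 4 statements merged into one kernel-verified Lean document; each statement's English description precedes it below -/
import Mathlib

section
/- Let G be a finite simple graph with distinct terminals s_1,…,s_k,t_1,…,t_k, and let U ⊆ V(G) be a set of size k containing no terminal such that U separates {s_1,…,s_k} from {t_1,…,t_k}. Then: (a) for every linkage 𝒫 = (P_1,…,P_k), each path P_i contains exactly one vertex of U; and (b) if a linkage 𝒫 is reconfigurable to a linkage 𝒬, then for every i the unique vertex of U on P_i equals the unique vertex of U on Q_i. -/
open Set

/-- A plane embedding of a finite simple graph. -/
structure PlaneEmbedding {V : Type} [Fintype V] [DecidableEq V] (G : SimpleGraph V) where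
  vert : V → ℝ × ℝ
  vert_inj : Function.Injective vert
  arc : ∀ {u v : V}, G.Adj u v → Path (vert u) (vert v)
  arc_inj : ∀ {u v : V} (h : G.Adj u v), Function.Injective (arc h)
  arc_symm : ∀ {u v : V} (h : G.Adj u v), arc h.symm = (arc h).symm
  arc_arc : ∀ {u v x y : V} (h : G.Adj u v) (h' : G.Adj x y),
    s(u, v) ≠ s(x, y) →
    Set.range (arc h) ∩ Set.range (arc h') ⊆ vert '' (({u, v} : Set V) ∩ {x, y})
  arc_vert : ∀ {u v : V} (h : G.Adj u v),
    Set.range (arc h) ∩ Set.range vert ⊆ {vert u, vert v}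

namespace PlaneEmbedding

variable {V : Type} [Fintype V] [DecidableEq V] {G : SimpleGraph V}

/-- The image of a plane embedding: all vertex points and all arc points. -/
def image (emb : PlaneEmbedding G) : Set (ℝ × ℝ) :=
  Set.range emb.vert ∪ ⋃ (u : V) (v : V) (h : G.Adj u v), Set.range (emb.arc h)

/-- A face of a plane embedding is a connected component of the complement of the image. -/
def IsFace (emb : PlaneEmbedding G) (F : Set (ℝ × ℝ)) : Prop :=
  ∃ x ∈ (emb.image)ᶜ, F = connectedComponentIn (emb.image)ᶜ x

/-- The curve of a walk: the concatenation of the arcs of its edges. -/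
noncomputable def walkCurve (emb : PlaneEmbedding G) :
    ∀ {u v : V}, G.Walk u v → Path (emb.vert u) (emb.vert v)
  | _, _, SimpleGraph.Walk.nil => Path.refl _
  | _, _, SimpleGraph.Walk.cons h w => (emb.arc h).trans (emb.walkCurve w)

end PlaneEmbedding

/-- A linkage: a tuple of pairwise vertex-disjoint paths, `path i` from `s i` to `t i`. -/
structure Linkage {V : Type} [Fintype V] [DecidableEq V] (G : SimpleGraph V) (k : ℕ)
    (s t : Fin k → V) where
  path : ∀ i : Fin k, G.Walk (s i) (t i)
  isPath : ∀ i, (path i).IsPath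
  disjoint : ∀ i j, i ≠ j → ∀ x : V, x ∈ (path i).support → x ∉ (path j).support

namespace Linkage

variable {V : Type} [Fintype V] [DecidableEq V] {G : SimpleGraph V} {k : ℕ} {s t : Fin k → V}

/-- Two linkages are adjacent if they differ in exactly one path. -/
def Adjacent (P Q : Linkage G k s t) : Prop :=
  ∃ i : Fin k, P.path i ≠ Q.path i ∧ ∀ j : Fin k, j ≠ i → P.path j = Q.path j

/-- A linkage is reconfigurable to another if there is a finite sequence of linkages
from one to the other in which consecutive members are adjacent. -/
def Reconfigurable (P Q : Linkage G k s t) : Prop :=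
  Relation.ReflTransGen Adjacent P Q

end Linkage

/-- An s-t linkage of size k: a set of k pairwise internally vertex-disjoint s-t paths. -/
structure STLinkage {V : Type} [Fintype V] [DecidableEq V] (G : SimpleGraph V) (s t : V)
    (k : ℕ) where
  paths : Finset (G.Path s t)
  card_eq : paths.card = k
  disjoint : ∀ P ∈ paths, ∀ Q ∈ paths, P ≠ Q →
    ∀ x : V, x ∈ (P : G.Walk s t).support → x ∈ (Q : G.Walk s t).support → x = s ∨ x = t

namespace STLinkage

variable {V : Type} [Fintype V] [DecidableEq V] {G : SimpleGraph V} {s t : V} {k : ℕ}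

/-- Two s-t linkages are adjacent if one is obtained from the other by removing one path
and adding one path. -/
def Adjacent (P Q : STLinkage G s t k) : Prop :=
  ∃ (p q : G.Path s t), p ∈ P.paths ∧ q ∉ P.paths ∧ Q.paths = insert q (P.paths.erase p)

/-- An s-t linkage is reconfigurable to another if there is a finite sequence of s-t linkages
from one to the other in which consecutive members are adjacent. -/
def Reconfigurable (P Q : STLinkage G s t k) : Prop :=
  Relation.ReflTransGen Adjacent P Q

end STLinkage

/-- An s-t separator: a set of vertices avoiding s and t that meets every s-t path. -/
def IsSTSeparator {V : Type} [Fintype V] [DecidableEq V] (G : SimpleGraph V) (s t : V)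
    (U : Finset V) : Prop :=
  s ∉ U ∧ t ∉ U ∧ ∀ W : G.Walk s t, ∃ x ∈ U, x ∈ W.support

/-- A terminal separator: a set of vertices containing no terminals that meets every path
from a source terminal to a sink terminal. -/
def IsTerminalSeparator {V : Type} [Fintype V] [DecidableEq V] (G : SimpleGraph V) {k : ℕ}
    (s t : Fin k → V) (U : Finset V) : Prop :=
  (∀ i, s i ∉ U) ∧ (∀ i, t i ∉ U) ∧
  ∀ (i j : Fin k) (W : G.Walk (s i) (t j)), ∃ x ∈ U, x ∈ W.support

/-- Two paths with the same endpoints are homotopic within a set `A` if there is a homotopy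
between them, relative to the endpoints, whose image is contained in `A`. -/
def HomotopicIn {X : Type} [TopologicalSpace X] (A : Set X) {x y : X}
    (γ₀ γ₁ : Path x y) : Prop :=
  ∃ H : C(unitInterval × unitInterval, X),
    (∀ a b : unitInterval, H (a, b) ∈ A) ∧
    (∀ b : unitInterval, H (0, b) = γ₀ b) ∧
    (∀ b : unitInterval, H (1, b) = γ₁ b) ∧
    (∀ a : unitInterval, H (a, 0) = x) ∧
    (∀ a : unitInterval, H (a, 1) = y)

/-- If U is a terminal separator of size k, then (a) each path of every linkage contains
exactly one vertex of U, and (b) along any reconfiguration the unique vertex of U on the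
i-th path is preserved. -/
theorem terminal_separator_unique_vertex_invariant
    {V : Type} [Fintype V] [DecidableEq V] {G : SimpleGraph V} {k : ℕ}
    (s t : Fin k → V)
    (hdist : Function.Injective (Sum.elim s t : Fin k ⊕ Fin k → V))
    (U : Finset V) (hcard : U.card = k)
    (hsep : IsTerminalSeparator G s t U) :
    (∀ (P : Linkage G k s t) (i : Fin k), ∃! x : V, x ∈ U ∧ x ∈ (P.path i).support) ∧
    (∀ P Q : Linkage G k s t, P.Reconfigurable Q →
      ∀ (i : Fin k) (x : V), x ∈ U →
        (x ∈ (P.path i).support ↔ x ∈ (Q.path i).support)) := by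

  classical
  have key : ∀ P : Linkage G k s t,
      (∀ i : Fin k, ∃! x : V, x ∈ U ∧ x ∈ (P.path i).support) ∧
      (∀ x ∈ U, ∃ i : Fin k, x ∈ (P.path i).support) := by
    intro P
    have hex : ∀ i : Fin k, ∃ x, x ∈ U ∧ x ∈ (P.path i).support := by
      intro i
      obtain ⟨x, hxU, hxs⟩ := hsep.2.2 i i (P.path i)
      exact ⟨x, hxU, hxs⟩
    choose f hfU hfs using hex
    have hinj : Function.Injective f := by
      intro i j hij
      by_contra hne
      exact P.disjoint i j hne (f i) (hfs i) (hij ▸ hfs j)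
    have himg : Finset.univ.image f = U := by
      apply Finset.eq_of_subset_of_card_le
      · intro x hx
        simp only [Finset.mem_image] at hx
        obtain ⟨i, _, rfl⟩ := hx
        exact hfU i
      · rw [hcard, Finset.card_image_of_injective _ hinj, Finset.card_univ, Fintype.card_fin]
    constructor
    · intro i
      refine ⟨f i, ⟨hfU i, hfs i⟩, ?_⟩
      rintro y ⟨hyU, hys⟩
      have hy : y ∈ Finset.univ.image f := himg ▸ hyU
      simp only [Finset.mem_image] at hy
      obtain ⟨j, -, rfl⟩ := hy
      rcases eq_or_ne j i with rfl | hji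
      · rfl
      · exact absurd hys (P.disjoint j i hji (f j) (hfs j))
    · intro x hxU
      have hx : x ∈ Finset.univ.image f := himg ▸ hxU
      simp only [Finset.mem_image] at hx
      obtain ⟨j, -, rfl⟩ := hx
      exact ⟨j, hfs j⟩
  have step : ∀ P Q : Linkage G k s t, Linkage.Adjacent P Q →
      ∀ (i : Fin k) (x : V), x ∈ U →
        (x ∈ (P.path i).support ↔ x ∈ (Q.path i).support) := by
    rintro P Q ⟨i0, -, heq⟩ i x hxU
    rcases eq_or_ne i i0 with rfl | hii
    · obtain ⟨a, ⟨haU, haP⟩, huP⟩ := (key P).1 i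
      obtain ⟨b, ⟨hbU, hbQ⟩, huQ⟩ := (key Q).1 i
      have hab : a = b := by
        obtain ⟨j, hj⟩ := (key Q).2 a haU
        rcases eq_or_ne j i with rfl | hji
        · exact huQ a ⟨haU, hj⟩
        · have : a ∈ (P.path j).support := (heq j hji) ▸ hj
          exact absurd this (P.disjoint i j (Ne.symm hji) a haP)
      constructor
      · intro hxP
        have hxa : x = a := huP x ⟨hxU, hxP⟩
        rw [hxa, hab]; exact hbQ
      · intro hxQ
        have hxb : x = b := huQ x ⟨hxU, hxQ⟩
        rw [hxb, ← hab]; exact haP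
    · rw [heq i hii]
  refine ⟨fun P => (key P).1, ?_⟩
  intro P Q hrec
  induction hrec with
  | refl => intro i x hx; rfl
  | tail hPR hRQ ih =>
    intro i x hx
    exact (ih i x hx).trans (step _ _ hRQ i x hx)
end

section
/- Let G be a finite simple graph with distinct terminals s_1,…,s_k,t_1,…,t_k. Let G_1 and G_2 be subgraphs of G with G = G_1 ∪ G_2 and V(G_1) ∩ V(G_2) = U, where |U| = k, U contains no terminal, each s_i ∈ V(G_1) ∖ U, and each t_i ∈ V(G_2) ∖ U. Let 𝒫 = (P_1,…,P_k) and 𝒬 = (Q_1,…,Q_k) be linkages such that for every i the paths P_i and Q_i meet U in the same single vertex u_i. Then each P_i is the concatenation of a path P_i^1 from s_i to u_i lying in G_1 and a path P_i^2 from u_i to t_i lying in G_2 (and similarly each Q_i decomposes as Q_i^1 and Q_i^2), and 𝒫 is reconfigurable to 𝒬 in G if and only if (P_1^1,…,P_k^1) is reconfigurable to (Q_1^1,…,Q_k^1) in G_1 with respect to the terminals (s_1,u_1),…,(s_k,u_k) and (P_1^2,…,P_k^2) is reconfigurable to (Q_1^2,…,Q_k^2) in G_2 with respect to the terminals (u_1,t_1),…,(u_k,t_k).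 -/
open Set

namespace AuxSplit

open SimpleGraph

set_option linter.unusedSectionVars false

variable {V : Type} [Fintype V] [DecidableEq V] {G : SimpleGraph V}

theorem rtg_of_eqOr {α : Type*} {r : α → α → Prop} {a b : α}
    (h : Relation.ReflTransGen (fun x y => x = y ∨ r x y) a b) :
    Relation.ReflTransGen r a b := by
  induction h with
  | refl => exact .refl
  | tail _ hstep ih =>
    rcases hstep with rfl | hstep
    · exact ih
    · exact ih.tail hstep

theorem linkage_ext {k : ℕ} {s t : Fin k → V} {P Q : Linkage G k s t}
    (h : ∀ i, P.path i = Q.path i) : P = Q := by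
  cases P; cases Q
  simp only [Linkage.mk.injEq]
  exact funext h

theorem support_mapLe {G H : SimpleGraph V} (hle : G ≤ H) {a b : V} (p : G.Walk a b) :
    (p.mapLe hle).support = p.support := by
  induction p with
  | nil => rfl
  | cons h q ih => simp [ih]

theorem mapLe_transfer {H : SimpleGraph V} (hle : H ≤ G) {a b : V} (p : G.Walk a b)
    (hp : ∀ e ∈ p.edges, e ∈ H.edgeSet) : (p.transfer H hp).mapLe hle = p := by
  induction p with
  | nil => rfl
  | cons h q ih => exact congrArg (Walk.cons h) (ih _)

theorem cross {G₁ G₂ : G.Subgraph} (hunion : G₁ ⊔ G₂ = ⊤) {U : Finset V}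
    (hU : G₁.verts ∩ G₂.verts = ↑U) {a b : V} (W : G.Walk a b) :
    a ∈ G₁.verts → b ∉ G₁.verts → ∃ x ∈ U, x ∈ W.support := by
  induction W with
  | nil => exact fun ha hb => absurd ha hb
  | @cons a c b h W ih =>
    intro ha hb
    by_cases hc : c ∈ G₁.verts
    · obtain ⟨x, hxU, hx⟩ := ih hc hb
      exact ⟨x, hxU, List.mem_cons_of_mem _ hx⟩
    · have hor : G₁.Adj a c ∨ G₂.Adj a c := by
        rw [← SimpleGraph.Subgraph.sup_adj, hunion, SimpleGraph.Subgraph.top_adj]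
        exact h
      rcases hor with h1 | h2
      · exact absurd (G₁.edge_vert h1.symm) hc
      · have haU : a ∈ (↑U : Set V) := hU ▸ ⟨ha, G₂.edge_vert h2⟩
        exact ⟨a, Finset.mem_coe.1 haU, (Walk.cons h W).start_mem_support⟩

theorem edgesLeft {G₁ G₂ : G.Subgraph} (hunion : G₁ ⊔ G₂ = ⊤) {U : Finset V}
    (hUU : ∀ x, x ∈ G₁.verts → x ∈ G₂.verts → x ∈ U) {a b : V} (W : G.Walk a b) :
    W.IsPath → a ∈ G₁.verts → (∀ x ∈ W.support, x ∈ U → x = b) →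
    ∀ e ∈ W.edges, e ∈ G₁.spanningCoe.edgeSet := by
  induction W with
  | nil => intro _ _ _ e he; simp at he
  | @cons a c b h W ih =>
    intro hp ha hsup e he
    have hpath := (Walk.cons_isPath_iff h W).1 hp
    have haU : a ∉ U := by
      intro haU
      have hab : a = b := hsup a (by simp) haU
      exact hpath.2 (hab ▸ W.end_mem_support)
    have h1 : G₁.Adj a c := by
      have hor : G₁.Adj a c ∨ G₂.Adj a c := by
        rw [← SimpleGraph.Subgraph.sup_adj, hunion, SimpleGraph.Subgraph.top_adj]
        exact h
      rcases hor with h1 | h2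
      · exact h1
      · exact absurd (hUU a ha (G₂.edge_vert h2)) haU
    rw [Walk.edges_cons, List.mem_cons] at he
    rcases he with rfl | he
    · exact h1
    · exact ih hpath.1 (G₁.edge_vert h1.symm)
        (fun x hx hxU => hsup x (List.mem_cons_of_mem _ hx) hxU) e he

theorem support_subset_verts {H : G.Subgraph} {a b : V} (W : H.spanningCoe.Walk a b) :
    b ∈ H.verts → ∀ x ∈ W.support, x ∈ H.verts := by
  induction W with
  | nil =>
    intro hb x hx
    rw [Walk.support_nil, List.mem_singleton] at hx
    exact hx ▸ hb
  | @cons a c b h W ih =>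
    intro hb x hx
    rw [Walk.support_cons, List.mem_cons] at hx
    rcases hx with rfl | hx
    · exact H.edge_vert h
    · exact ih hb x hx

/-- first part of a split walk, transferred into `G₁`. -/
noncomputable def splitFst (G₁ : G.Subgraph) {a b c : V} (W : G.Walk a b) (hc : c ∈ W.support)
    (hE : ∀ e ∈ (W.takeUntil c hc).edges, e ∈ G₁.spanningCoe.edgeSet) :
    G₁.spanningCoe.Walk a c :=
  (W.takeUntil c hc).transfer _ hE

/-- second part of a split walk, transferred into `G₂`. -/
noncomputable def splitSnd (G₂ : G.Subgraph) {a b c : V} (W : G.Walk a b) (hc : c ∈ W.support)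
    (hE : ∀ e ∈ (W.dropUntil c hc).reverse.edges, e ∈ G₂.spanningCoe.edgeSet) :
    G₂.spanningCoe.Walk c b :=
  ((W.dropUntil c hc).reverse.transfer _ hE).reverse

theorem splitFst_mapLe {G₁ : G.Subgraph} {a b c : V} (W : G.Walk a b) (hc : c ∈ W.support)
    (hE : ∀ e ∈ (W.takeUntil c hc).edges, e ∈ G₁.spanningCoe.edgeSet) :
    (splitFst G₁ W hc hE).mapLe G₁.spanningCoe_le = W.takeUntil c hc :=
  mapLe_transfer _ _ _

theorem splitSnd_mapLe {G₂ : G.Subgraph} {a b c : V} (W : G.Walk a b) (hc : c ∈ W.support)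
    (hE : ∀ e ∈ (W.dropUntil c hc).reverse.edges, e ∈ G₂.spanningCoe.edgeSet) :
    (splitSnd G₂ W hc hE).mapLe G₂.spanningCoe_le = W.dropUntil c hc := by
  have h1 := mapLe_transfer (G := G) G₂.spanningCoe_le (W.dropUntil c hc).reverse hE
  unfold splitSnd Walk.mapLe
  unfold Walk.mapLe at h1
  rw [← Walk.reverse_map, h1, Walk.reverse_reverse]

theorem splitSpec {G₁ G₂ : G.Subgraph} {a b c : V} (W : G.Walk a b) (hc : c ∈ W.support)
    (hE₁ : ∀ e ∈ (W.takeUntil c hc).edges, e ∈ G₁.spanningCoe.edgeSet)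
    (hE₂ : ∀ e ∈ (W.dropUntil c hc).reverse.edges, e ∈ G₂.spanningCoe.edgeSet) :
    ((splitFst G₁ W hc hE₁).mapLe G₁.spanningCoe_le).append
      ((splitSnd G₂ W hc hE₂).mapLe G₂.spanningCoe_le) = W := by
  rw [splitFst_mapLe, splitSnd_mapLe, Walk.take_spec]

theorem support_splitFst {G₁ : G.Subgraph} {a b c : V} (W : G.Walk a b) (hc : c ∈ W.support)
    (hE : ∀ e ∈ (W.takeUntil c hc).edges, e ∈ G₁.spanningCoe.edgeSet) :
    (splitFst G₁ W hc hE).support = (W.takeUntil c hc).support :=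
  Walk.support_transfer _ _

theorem support_splitSnd {G₂ : G.Subgraph} {a b c : V} (W : G.Walk a b) (hc : c ∈ W.support)
    (hE : ∀ e ∈ (W.dropUntil c hc).reverse.edges, e ∈ G₂.spanningCoe.edgeSet) :
    (splitSnd G₂ W hc hE).support = (W.dropUntil c hc).support := by
  unfold splitSnd
  rw [Walk.support_reverse, Walk.support_transfer, Walk.support_reverse, List.reverse_reverse]

end AuxSplit

/-- Splitting a Disjoint Paths Reconfiguration instance along a terminal separator U of
size k: if G = G₁ ∪ G₂ with V(G₁) ∩ V(G₂) = U, sources in G₁ ∖ U, sinks in G₂ ∖ U, and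
both linkages meet U in the same vertex u i on the i-th path, then each linkage path
decomposes as a path in G₁ followed by a path in G₂, and P is reconfigurable to Q in G
iff the first parts are reconfigurable in G₁ and the second parts in G₂. -/
theorem reconfigurable_iff_split_along_separator
    {V : Type} [Fintype V] [DecidableEq V] {G : SimpleGraph V} {k : ℕ}
    (s t : Fin k → V)
    (hdist : Function.Injective (Sum.elim s t : Fin k ⊕ Fin k → V))
    (G₁ G₂ : G.Subgraph) (hunion : G₁ ⊔ G₂ = ⊤)
    (U : Finset V) (hU : G₁.verts ∩ G₂.verts = ↑U) (hcard : U.card = k)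
    (hUterm : ∀ i : Fin k, s i ∉ U ∧ t i ∉ U)
    (hsG₁ : ∀ i : Fin k, s i ∈ G₁.verts \ ↑U)
    (htG₂ : ∀ i : Fin k, t i ∈ G₂.verts \ ↑U)
    (u : Fin k → V) (hu : ∀ i, u i ∈ U)
    (P Q : Linkage G k s t)
    (hPu : ∀ (i : Fin k) (x : V), x ∈ U → (x ∈ (P.path i).support ↔ x = u i))
    (hQu : ∀ (i : Fin k) (x : V), x ∈ U → (x ∈ (Q.path i).support ↔ x = u i)) :
    (∀ i : Fin k, ∃ (W₁ : G₁.spanningCoe.Walk (s i) (u i))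
        (W₂ : G₂.spanningCoe.Walk (u i) (t i)),
      P.path i = (W₁.mapLe G₁.spanningCoe_le).append (W₂.mapLe G₂.spanningCoe_le)) ∧
    (∀ i : Fin k, ∃ (W₁ : G₁.spanningCoe.Walk (s i) (u i))
        (W₂ : G₂.spanningCoe.Walk (u i) (t i)),
      Q.path i = (W₁.mapLe G₁.spanningCoe_le).append (W₂.mapLe G₂.spanningCoe_le)) ∧
    (P.Reconfigurable Q ↔
      ∃ (P₁ Q₁ : Linkage G₁.spanningCoe k s u) (P₂ Q₂ : Linkage G₂.spanningCoe k u t),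
        (∀ i : Fin k, P.path i =
          ((P₁.path i).mapLe G₁.spanningCoe_le).append ((P₂.path i).mapLe G₂.spanningCoe_le)) ∧
        (∀ i : Fin k, Q.path i =
          ((Q₁.path i).mapLe G₁.spanningCoe_le).append ((Q₂.path i).mapLe G₂.spanningCoe_le)) ∧
        P₁.Reconfigurable Q₁ ∧ P₂.Reconfigurable Q₂) := by
  classical
  open AuxSplit SimpleGraph in
  -- basic membership facts
  have hUsub₁ : (↑U : Set V) ⊆ G₁.verts := by rw [← hU]; exact Set.inter_subset_left
  have hUsub₂ : (↑U : Set V) ⊆ G₂.verts := by rw [← hU]; exact Set.inter_subset_right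
  have hUU : ∀ x, x ∈ G₁.verts → x ∈ G₂.verts → x ∈ U := by
    intro x h1 h2
    exact Finset.mem_coe.1 (hU ▸ ⟨h1, h2⟩)
  have hUU' : ∀ x, x ∈ G₂.verts → x ∈ G₁.verts → x ∈ U := fun x h2 h1 => hUU x h1 h2
  have hunion' : G₂ ⊔ G₁ = ⊤ := by rw [sup_comm]; exact hunion
  have hU' : G₂.verts ∩ G₁.verts = ↑U := by rw [Set.inter_comm]; exact hU
  have htG₁ : ∀ i, t i ∉ G₁.verts := by
    intro i hti
    exact (htG₂ i).2 (hU ▸ ⟨hti, (htG₂ i).1⟩)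
  have hsG₂ : ∀ i, s i ∉ G₂.verts := by
    intro i hsi
    exact (hsG₁ i).2 (hU ▸ ⟨(hsG₁ i).1, hsi⟩)
  -- every linkage path meeting U only in `u i` contains `u i`
  have memU : ∀ (R : Linkage G k s t),
      (∀ i x, x ∈ U → (x ∈ (R.path i).support ↔ x = u i)) →
      ∀ i, u i ∈ (R.path i).support := by
    intro R hR i
    obtain ⟨x, hxU, hx⟩ := cross hunion hU (R.path i) (hsG₁ i).1 (htG₁ i)
    exact (hR i x hxU).1 hx ▸ hx
  have uinj : Function.Injective u := by
    intro i j hij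
    by_contra hne
    exact P.disjoint i j hne (u i) (memU P hPu i) (hij ▸ memU P hPu j)
  have usurj : ∀ x ∈ U, ∃ i, u i = x := by
    intro x hx
    have himg : Finset.image u Finset.univ = U := by
      apply Finset.eq_of_subset_of_card_le
      · intro y hy
        obtain ⟨i, _, rfl⟩ := Finset.mem_image.1 hy
        exact hu i
      · rw [Finset.card_image_of_injective _ uinj, Finset.card_univ, Fintype.card_fin, hcard]
    obtain ⟨i, _, hi⟩ := Finset.mem_image.1 (himg ▸ hx)
    exact ⟨i, hi⟩
  -- edge conditions for splitting
  have hE₁ : ∀ (R : Linkage G k s t),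
      (∀ i x, x ∈ U → (x ∈ (R.path i).support ↔ x = u i)) →
      ∀ (i : Fin k) (hm : u i ∈ (R.path i).support),
      ∀ e ∈ ((R.path i).takeUntil (u i) hm).edges, e ∈ G₁.spanningCoe.edgeSet := by
    intro R hR i hm
    apply edgesLeft hunion hUU _ ((R.isPath i).takeUntil hm) (hsG₁ i).1
    intro x hx hxU
    exact (hR i x hxU).1 ((R.path i).support_takeUntil_subset hm hx)
  have hE₂ : ∀ (R : Linkage G k s t),
      (∀ i x, x ∈ U → (x ∈ (R.path i).support ↔ x = u i)) →
      ∀ (i : Fin k) (hm : u i ∈ (R.path i).support),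
      ∀ e ∈ ((R.path i).dropUntil (u i) hm).reverse.edges, e ∈ G₂.spanningCoe.edgeSet := by
    intro R hR i hm
    apply edgesLeft hunion' hUU' _ ((R.isPath i).dropUntil hm).reverse (htG₂ i).1
    intro x hx hxU
    rw [Walk.support_reverse, List.mem_reverse] at hx
    exact (hR i x hxU).1 ((R.path i).support_dropUntil_subset hm hx)
  -- the full split of an invariant linkage
  have buildSplit : ∀ (R : Linkage G k s t)
      (hR : ∀ i x, x ∈ U → (x ∈ (R.path i).support ↔ x = u i)),
      ∃ (R₁ : Linkage G₁.spanningCoe k s u) (R₂ : Linkage G₂.spanningCoe k u t),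
        ∀ i, R.path i = ((R₁.path i).mapLe G₁.spanningCoe_le).append
          ((R₂.path i).mapLe G₂.spanningCoe_le) := by
    intro R hR
    refine ⟨⟨fun i => splitFst G₁ (R.path i) (memU R hR i) (hE₁ R hR i _), ?_, ?_⟩,
            ⟨fun i => splitSnd G₂ (R.path i) (memU R hR i) (hE₂ R hR i _), ?_, ?_⟩, ?_⟩
    · intro i
      rw [Walk.isPath_def, support_splitFst]
      exact ((R.isPath i).takeUntil _).support_nodup
    · intro i j hne x hx hx'
      rw [support_splitFst] at hx hx'
      exact R.disjoint i j hne x ((R.path i).support_takeUntil_subset _ hx)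
        ((R.path j).support_takeUntil_subset _ hx')
    · intro i
      rw [Walk.isPath_def, support_splitSnd]
      exact ((R.isPath i).dropUntil _).support_nodup
    · intro i j hne x hx hx'
      rw [support_splitSnd] at hx hx'
      exact R.disjoint i j hne x ((R.path i).support_dropUntil_subset _ hx)
        ((R.path j).support_dropUntil_subset _ hx')
    · intro i
      exact (splitSpec (R.path i) (memU R hR i) _ _).symm
  obtain ⟨P₁, P₂, hgoodP⟩ := buildSplit P hPu
  obtain ⟨Q₁', Q₂', hgoodQ'⟩ := buildSplit Q hQu
  refine ⟨fun i => ⟨P₁.path i, P₂.path i, hgoodP i⟩,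
          fun i => ⟨Q₁'.path i, Q₂'.path i, hgoodQ' i⟩, ?_, ?_⟩
  · -- forward direction
    intro hrec
    suffices h : ∀ R : Linkage G k s t, Relation.ReflTransGen Linkage.Adjacent P R →
        (∀ i x, x ∈ U → (x ∈ (R.path i).support ↔ x = u i)) ∧
        ∃ (R₁ : Linkage G₁.spanningCoe k s u) (R₂ : Linkage G₂.spanningCoe k u t),
          (∀ i, R.path i = ((R₁.path i).mapLe G₁.spanningCoe_le).append
            ((R₂.path i).mapLe G₂.spanningCoe_le)) ∧
          P₁.Reconfigurable R₁ ∧ P₂.Reconfigurable R₂ by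
      obtain ⟨_, Q₁, Q₂, hgoodQ, h1, h2⟩ := h Q hrec
      exact ⟨P₁, Q₁, P₂, Q₂, hgoodP, hgoodQ, h1, h2⟩
    intro R hR
    induction hR with
    | refl => exact ⟨hPu, P₁, P₂, hgoodP, .refl, .refl⟩
    | @tail R R'' hRTG hadj ih =>
      obtain ⟨hinv, R₁, R₂, good, rtg1, rtg2⟩ := ih
      obtain ⟨i, hnei, hsame⟩ := hadj
      -- the invariant is preserved
      have key : ∀ x ∈ U, x ∈ (R''.path i).support → x = u i := by
        intro x hxU hx
        obtain ⟨j, rfl⟩ := usurj x hxU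
        by_contra hne'
        have hji : j ≠ i := fun hji => hne' (by rw [hji])
        have hmem : u j ∈ (R''.path j).support := by
          rw [← hsame j hji]; exact memU R hinv j
        exact R''.disjoint i j (fun hh => hji hh.symm) _ hx hmem
      have hinv'' : ∀ j x, x ∈ U → (x ∈ (R''.path j).support ↔ x = u j) := by
        intro j x hxU
        by_cases hj : j = i
        · subst hj
          constructor
          · exact key x hxU
          · rintro rfl
            obtain ⟨y, hyU, hy⟩ := cross hunion hU (R''.path j) (hsG₁ j).1 (htG₁ j)
            exact key y hyU hy ▸ hy
        · rw [← hsame j hj]; exact hinv j x hxU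
      have hmem'' : u i ∈ (R''.path i).support := memU R'' hinv'' i
      -- supports of the old split parts
      have hsub1 : ∀ j, (R₁.path j).support ⊆ (R.path j).support := by
        intro j x hx
        rw [good j]
        apply Walk.subset_support_append_left
        rw [support_mapLe]; exact hx
      have hsub2 : ∀ j, (R₂.path j).support ⊆ (R.path j).support := by
        intro j x hx
        rw [good j]
        apply Walk.subset_support_append_right
        rw [support_mapLe]; exact hx
      -- the new split linkages, modified only at coordinate i
      set W₁ : G₁.spanningCoe.Walk (s i) (u i) :=
        splitFst G₁ (R''.path i) hmem'' (hE₁ R'' hinv'' i hmem'') with hW₁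
      set W₂ : G₂.spanningCoe.Walk (u i) (t i) :=
        splitSnd G₂ (R''.path i) hmem'' (hE₂ R'' hinv'' i hmem'') with hW₂
      have hsub1'' : ∀ j, ((Function.update R₁.path i W₁) j).support ⊆ (R''.path j).support := by
        intro j
        by_cases hj : j = i
        · subst hj
          rw [Function.update_self, hW₁, support_splitFst]
          exact (R''.path j).support_takeUntil_subset _
        · rw [Function.update_of_ne hj, ← hsame j hj]
          exact hsub1 j
      have hsub2'' : ∀ j, ((Function.update R₂.path i W₂) j).support ⊆ (R''.path j).support := by
        intro j
        by_cases hj : j = i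
        · subst hj
          rw [Function.update_self, hW₂, support_splitSnd]
          exact (R''.path j).support_dropUntil_subset _
        · rw [Function.update_of_ne hj, ← hsame j hj]
          exact hsub2 j
      have step1 : ∀ (X : Linkage G₁.spanningCoe k s u),
          X.path = Function.update R₁.path i W₁ → P₁.Reconfigurable X := by
        intro X hX
        by_cases hEq : W₁ = R₁.path i
        · have hXR : X = R₁ := by
            apply linkage_ext
            intro j
            rw [hX]
            by_cases hj : j = i
            · subst hj; rw [Function.update_self, hEq]
            · rw [Function.update_of_ne hj]
          rw [hXR]; exact rtg1
        · refine rtg1.tail ⟨i, ?_, ?_⟩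
          · rw [hX, Function.update_self]
            exact fun hh => hEq hh.symm
          · intro j hj
            rw [hX, Function.update_of_ne hj]
      have step2 : ∀ (X : Linkage G₂.spanningCoe k u t),
          X.path = Function.update R₂.path i W₂ → P₂.Reconfigurable X := by
        intro X hX
        by_cases hEq : W₂ = R₂.path i
        · have hXR : X = R₂ := by
            apply linkage_ext
            intro j
            rw [hX]
            by_cases hj : j = i
            · subst hj; rw [Function.update_self, hEq]
            · rw [Function.update_of_ne hj]
          rw [hXR]; exact rtg2
        · refine rtg2.tail ⟨i, ?_, ?_⟩
          · rw [hX, Function.update_self]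
            exact fun hh => hEq hh.symm
          · intro j hj
            rw [hX, Function.update_of_ne hj]
      refine ⟨hinv'',
        ⟨Function.update R₁.path i W₁, ?_, ?_⟩,
        ⟨Function.update R₂.path i W₂, ?_, ?_⟩, ?_, ?_, ?_⟩
      · intro j
        by_cases hj : j = i
        · subst hj
          rw [Function.update_self, hW₁, Walk.isPath_def, support_splitFst]
          exact ((R''.isPath j).takeUntil _).support_nodup
        · rw [Function.update_of_ne hj]; exact R₁.isPath j
      · intro i' j' hne x hx hx'
        exact R''.disjoint i' j' hne x (hsub1'' i' hx) (hsub1'' j' hx')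
      · intro j
        by_cases hj : j = i
        · subst hj
          rw [Function.update_self, hW₂, Walk.isPath_def, support_splitSnd]
          exact ((R''.isPath j).dropUntil _).support_nodup
        · rw [Function.update_of_ne hj]; exact R₂.isPath j
      · intro i' j' hne x hx hx'
        exact R''.disjoint i' j' hne x (hsub2'' i' hx) (hsub2'' j' hx')
      · intro j
        by_cases hj : j = i
        · subst hj
          show R''.path j = ((Function.update R₁.path j W₁ j).mapLe _).append
            ((Function.update R₂.path j W₂ j).mapLe _)
          rw [Function.update_self, Function.update_self, hW₁, hW₂]
          exact (splitSpec (R''.path j) hmem'' _ _).symm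
        · show R''.path j = ((Function.update R₁.path i W₁ j).mapLe _).append
            ((Function.update R₂.path i W₂ j).mapLe _)
          rw [Function.update_of_ne hj, Function.update_of_ne hj, ← hsame j hj]
          exact good j
      · exact step1 _ rfl
      · exact step2 _ rfl
  · -- backward direction
    rintro ⟨P₁', Q₁, P₂', Q₂, hP', hQ', h1, h2⟩
    have hAU : ∀ (A : Linkage G₁.spanningCoe k s u) (i : Fin k) (x : V),
        x ∈ (A.path i).support → x ∈ U → x = u i := by
      intro A i x hx hxU
      obtain ⟨j, rfl⟩ := usurj x hxU
      by_cases hij : j = i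
      · rw [hij]
      · exact absurd ((A.path j).end_mem_support)
          (A.disjoint i j (fun hh => hij hh.symm) _ hx)
    have hBU : ∀ (B : Linkage G₂.spanningCoe k u t) (i : Fin k) (x : V),
        x ∈ (B.path i).support → x ∈ U → x = u i := by
      intro B i x hx hxU
      obtain ⟨j, rfl⟩ := usurj x hxU
      by_cases hij : j = i
      · rw [hij]
      · exact absurd ((B.path j).start_mem_support)
          (B.disjoint i j (fun hh => hij hh.symm) _ hx)
    have hsupA : ∀ (A : Linkage G₁.spanningCoe k s u) (i : Fin k) (x : V),
        x ∈ (A.path i).support → x ∈ G₁.verts := by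
      intro A i x hx
      exact support_subset_verts (A.path i) (hUsub₁ (Finset.mem_coe.2 (hu i))) x hx
    have hsupB : ∀ (B : Linkage G₂.spanningCoe k u t) (i : Fin k) (x : V),
        x ∈ (B.path i).support → x ∈ G₂.verts := by
      intro B i x hx
      exact support_subset_verts (B.path i) (htG₂ i).1 x hx
    let combine : Linkage G₁.spanningCoe k s u → Linkage G₂.spanningCoe k u t →
        Linkage G k s t := fun A B =>
      { path := fun i => ((A.path i).mapLe G₁.spanningCoe_le).append
          ((B.path i).mapLe G₂.spanningCoe_le)
        isPath := by
          intro i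
          rw [Walk.isPath_def, Walk.support_append]
          apply List.Nodup.append
          · rw [support_mapLe]; exact (A.isPath i).support_nodup
          · rw [support_mapLe]
            exact ((B.isPath i).support_nodup).tail
          · intro x hx hx'
            rw [support_mapLe] at hx
            have hx'' : x ∈ (B.path i).support := by
              have := List.mem_of_mem_tail hx'
              rwa [support_mapLe] at this
            have hxU : x ∈ U := hUU x (hsupA A i x hx) (hsupB B i x hx'')
            have hxu : x = u i := hAU A i x hx hxU
            subst hxu
            have hnd := (B.isPath i).support_nodup
            rw [(B.path i).support_eq_cons] at hnd
            rw [support_mapLe] at hx'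
            exact (List.nodup_cons.1 hnd).1 hx'
        disjoint := by
          intro i j hne x hxi hxj
          rw [Walk.mem_support_append_iff, support_mapLe, support_mapLe] at hxi hxj
          rcases hxi with hxi | hxi <;> rcases hxj with hxj | hxj
          · exact A.disjoint i j hne x hxi hxj
          · have e1 := hAU A i x hxi (hUU x (hsupA A i x hxi) (hsupB B j x hxj))
            have e2 := hBU B j x hxj (hUU x (hsupA A i x hxi) (hsupB B j x hxj))
            exact hne (uinj (e1 ▸ e2 ▸ rfl))
          · have e1 := hBU B i x hxi (hUU x (hsupA A j x hxj) (hsupB B i x hxi))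
            have e2 := hAU A j x hxj (hUU x (hsupA A j x hxj) (hsupB B i x hxi))
            exact hne (uinj (e2 ▸ e1 ▸ rfl))
          · exact B.disjoint i j hne x hxi hxj }
    have hcpath : ∀ A B i, (combine A B).path i =
        ((A.path i).mapLe G₁.spanningCoe_le).append ((B.path i).mapLe G₂.spanningCoe_le) :=
      fun _ _ _ => rfl
    have hPc : P = combine P₁' P₂' := linkage_ext fun i => hP' i
    have hQc : Q = combine Q₁ Q₂ := linkage_ext fun i => hQ' i
    rw [show P.Reconfigurable Q ↔ Relation.ReflTransGen Linkage.Adjacent P Q from Iff.rfl,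
      hPc, hQc]
    have lift1 : ∀ (B : Linkage G₂.spanningCoe k u t) {A A' : Linkage G₁.spanningCoe k s u},
        A.Reconfigurable A' →
        Relation.ReflTransGen Linkage.Adjacent (combine A B) (combine A' B) := by
      intro B A A' h
      apply rtg_of_eqOr
      refine Relation.ReflTransGen.lift (fun X => combine X B) ?_ _ _ h
      intro X Y hXY
      obtain ⟨i, hne, hsame⟩ := hXY
      by_cases hpe : (combine X B).path i = (combine Y B).path i
      · left
        apply linkage_ext
        intro j
        by_cases hj : j = i
        · subst hj; exact hpe
        · rw [hcpath, hcpath, hsame j hj]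
      · right
        exact ⟨i, hpe, fun j hj => by rw [hcpath, hcpath, hsame j hj]⟩
    have lift2 : ∀ (A : Linkage G₁.spanningCoe k s u) {B B' : Linkage G₂.spanningCoe k u t},
        B.Reconfigurable B' →
        Relation.ReflTransGen Linkage.Adjacent (combine A B) (combine A B') := by
      intro A B B' h
      apply rtg_of_eqOr
      refine Relation.ReflTransGen.lift (fun X => combine A X) ?_ _ _ h
      intro X Y hXY
      obtain ⟨i, hne, hsame⟩ := hXY
      by_cases hpe : (combine A X).path i = (combine A Y).path i
      · left
        apply linkage_ext
        intro j
        by_cases hj : j = i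
        · subst hj; exact hpe
        · rw [hcpath, hcpath, hsame j hj]
      · right
        exact ⟨i, hpe, fun j hj => by rw [hcpath, hcpath, hsame j hj]⟩
    exact (lift1 P₂' h1).trans (lift2 Q₁ h2)
end

section
/- Let G be a finite simple graph, s ≠ t vertices, and U an s-t separator of G with |U| = k. If 𝒫 and 𝒬 are adjacent s-t linkages of size k with 𝒬 = (𝒫 ∖ {P}) ∪ {Q} for paths P ∈ 𝒫 and Q ∉ 𝒫, then the unique vertex of U contained in P equals the unique vertex of U contained in Q. Consequently, along any reconfiguration sequence of s-t linkages of size k, the set of vertices of U used by the linkage is invariant, and the replaced path always keeps its vertex of U. -/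
open Set

/-- Let U be an s-t separator of size k. (a) In any adjacency step of s-t linkages of
size k replacing a path p by a path q, the vertex of U on p equals the vertex of U on q.
(b) Consequently, along any reconfiguration sequence the set of vertices of U used by the
linkage is invariant. -/
theorem separator_vertex_invariant_along_reconfiguration
    {V : Type} [Fintype V] [DecidableEq V] {G : SimpleGraph V}
    {s t : V} (hst : s ≠ t) {k : ℕ} {U : Finset V}
    (hU : IsSTSeparator G s t U) (hcard : U.card = k) :
    (∀ (P Q : STLinkage G s t k) (p q : G.Path s t),
      p ∈ P.paths → q ∉ P.paths → Q.paths = insert q (P.paths.erase p) →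
      ∀ x ∈ U, (x ∈ (p : G.Walk s t).support ↔ x ∈ (q : G.Walk s t).support)) ∧
    (∀ P Q : STLinkage G s t k, P.Reconfigurable Q →
      {x : V | x ∈ U ∧ ∃ p ∈ P.paths, x ∈ (p : G.Walk s t).support} =
      {x : V | x ∈ U ∧ ∃ q ∈ Q.paths, x ∈ (q : G.Walk s t).support}) := by
  obtain ⟨hsU, htU, hsep⟩ := hU
  -- Key: for every linkage, there is a function picking the unique U-vertex of each path,
  -- and it is surjective onto U.
  have key : ∀ (P : STLinkage G s t k), ∃ f : {p // p ∈ P.paths} → V,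
      (∀ p, f p ∈ U ∧ f p ∈ ((p : G.Path s t) : G.Walk s t).support) ∧
      (∀ (p : {p // p ∈ P.paths}) (x : V), x ∈ U →
        x ∈ ((p : G.Path s t) : G.Walk s t).support → x = f p) ∧
      (∀ x ∈ U, ∃ p : {p // p ∈ P.paths}, f p = x) := by
    intro P
    choose f hfU hfsupp using fun p : {p // p ∈ P.paths} =>
      hsep ((p : G.Path s t) : G.Walk s t)
    have hdisj : ∀ (p q : {p // p ∈ P.paths}), p ≠ q → ∀ x ∈ U,
        x ∈ ((p : G.Path s t) : G.Walk s t).support →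
        x ∈ ((q : G.Path s t) : G.Walk s t).support → False := by
      intro p q hne x hxU hxp hxq
      have hne' : (p : G.Path s t) ≠ q := fun h => hne (Subtype.ext h)
      rcases P.disjoint p p.2 q q.2 hne' x hxp hxq with h | h
      · exact hsU (h ▸ hxU)
      · exact htU (h ▸ hxU)
    set F : {p // p ∈ P.paths} → {x // x ∈ U} := fun p => ⟨f p, hfU p⟩ with hF
    have hinj : Function.Injective F := by
      intro p q h
      by_contra hne
      have hval : f p = f q := congrArg Subtype.val h
      exact hdisj p q hne (f p) (hfU p) (hfsupp p) (hval ▸ hfsupp q)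
    have hcards : Fintype.card {p // p ∈ P.paths} = Fintype.card {x // x ∈ U} := by
      simp [Fintype.card_coe, P.card_eq, hcard]
    have hbij : Function.Bijective F :=
      (Fintype.bijective_iff_injective_and_card F).mpr ⟨hinj, hcards⟩
    refine ⟨f, fun p => ⟨hfU p, hfsupp p⟩, ?_, ?_⟩
    · intro p x hxU hxp
      obtain ⟨p', hp'⟩ := hbij.surjective ⟨x, hxU⟩
      have hx' : f p' = x := congrArg Subtype.val hp'
      by_cases hpe : p' = p
      · rw [← hx', hpe]
      · exact absurd (hdisj p' p hpe x hxU (hx' ▸ hfsupp p') hxp) (fun h => h)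
    · intro x hxU
      obtain ⟨p', hp'⟩ := hbij.surjective ⟨x, hxU⟩
      exact ⟨p', congrArg Subtype.val hp'⟩
  constructor
  · -- part (a)
    intro P Q p q hp hq hQ x hxU
    obtain ⟨fP, hfP, huP, hsP⟩ := key P
    obtain ⟨fQ, hfQ, huQ, hsQ⟩ := key Q
    have hqQ : q ∈ Q.paths := by rw [hQ]; exact Finset.mem_insert_self _ _
    set u : V := fP ⟨p, hp⟩ with hu
    have huU : u ∈ U := (hfP ⟨p, hp⟩).1
    have hup : u ∈ (p : G.Walk s t).support := (hfP ⟨p, hp⟩).2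
    -- u lies on some path of Q
    obtain ⟨r, hr⟩ := hsQ u huU
    have hruq : (r : G.Path s t) = q := by
      by_contra hne
      have hrQ : (r : G.Path s t) ∈ insert q (P.paths.erase p) := by
        rw [← hQ]; exact r.2
      rcases Finset.mem_insert.mp hrQ with h | h
      · exact hne h
      · have hrP : (r : G.Path s t) ∈ P.paths := Finset.mem_of_mem_erase h
        have hrp : (r : G.Path s t) ≠ p := Finset.ne_of_mem_erase h
        have hur : u ∈ ((r : G.Path s t) : G.Walk s t).support := hr ▸ (hfQ r).2
        rcases P.disjoint r hrP p hp hrp u hur hup with h' | h'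
        · exact hsU (h' ▸ huU)
        · exact htU (h' ▸ huU)
    have huq : u ∈ (q : G.Walk s t).support := by
      have := (hfQ r).2
      rw [hr] at this
      rwa [hruq] at this
    have hq_eq : fQ ⟨q, hqQ⟩ = u := (huQ ⟨q, hqQ⟩ u huU huq).symm
    constructor
    · intro hxp
      have : x = u := huP ⟨p, hp⟩ x hxU hxp
      rw [this]; exact huq
    · intro hxq
      have : x = fQ ⟨q, hqQ⟩ := huQ ⟨q, hqQ⟩ x hxU hxq
      rw [this, hq_eq]; exact hup
  · -- part (b): both sets equal ↑U
    have hall : ∀ P : STLinkage G s t k,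
        {x : V | x ∈ U ∧ ∃ p ∈ P.paths, x ∈ (p : G.Walk s t).support} = ↑U := by
      intro P
      obtain ⟨fP, hfP, huP, hsP⟩ := key P
      ext x
      simp only [Set.mem_setOf_eq, Finset.coe_mem, Finset.mem_coe]
      constructor
      · exact fun h => h.1
      · intro hxU
        obtain ⟨p', hp'⟩ := hsP x hxU
        exact ⟨hxU, p', p'.2, hp' ▸ (hfP p').2⟩
    intro P Q _
    rw [hall P, hall Q]
end

section
/- Let G be a finite bipartite simple graph with bipartition (A, B), and let M and M' be matchings of G with |M| = |M'| = k. Form the graph G' from G by adding two new vertices s and t, joining s to every vertex of A and t to every vertex of B. For a matching N of G of size k, let 𝒫_N be the s-t linkage of size k in G' consisting of the k paths (s, a, b, t) for the edges {a,b} ∈ N. Then M can be transformed into M' by a sequence of token jumps (each step removes one edge from the current matching and adds one edge, so that every intermediate set is a matching of size k) if and only if 𝒫_M is reconfigurable to 𝒫_{M'} in G'. -/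
open Set

/-- A set of edges of G that forms a matching: all elements are edges and no two distinct
members share a vertex. -/
def IsMatchingSet {V : Type} [Fintype V] [DecidableEq V] (G : SimpleGraph V)
    (N : Finset (Sym2 V)) : Prop :=
  (∀ e ∈ N, e ∈ G.edgeSet) ∧
  ∀ e ∈ N, ∀ f ∈ N, e ≠ f → ∀ v : V, v ∈ e → v ∉ f

/-- A token jump step between matchings of size k: remove one edge and add one edge, with
both endpoints of the step being matchings of size k. -/
def TokenJumpStep {V : Type} [Fintype V] [DecidableEq V] (G : SimpleGraph V) (k : ℕ)
    (N N' : Finset (Sym2 V)) : Prop :=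
  IsMatchingSet G N ∧ IsMatchingSet G N' ∧ N.card = k ∧ N'.card = k ∧
  ∃ e f : Sym2 V, e ∈ N ∧ f ∉ N ∧ N' = insert f (N.erase e)

/-- The graph G' obtained from G by adding a new vertex `Sum.inr false` (called s) joined
to every vertex of A and a new vertex `Sum.inr true` (called t) joined to every vertex
of B. -/
def matchingGraph {V : Type} [Fintype V] [DecidableEq V] (G : SimpleGraph V)
    (A B : Set V) : SimpleGraph (V ⊕ Bool) where
  Adj x y :=
    match x, y with
    | Sum.inl u, Sum.inl v => G.Adj u v
    | Sum.inl u, Sum.inr b => (b = false ∧ u ∈ A) ∨ (b = true ∧ u ∈ B)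
    | Sum.inr b, Sum.inl u => (b = false ∧ u ∈ A) ∨ (b = true ∧ u ∈ B)
    | Sum.inr _, Sum.inr _ => False
  symm := by
    refine ⟨?_⟩
    rintro (u | b) (v | c) h
    · exact G.adj_symm h
    · exact h
    · exact h
    · exact h
  loopless := by
    refine ⟨?_⟩
    rintro (u | b) h
    · exact G.irrefl h
    · exact h

/-- The s-t linkage `𝒫_N` associated with a matching N of the bipartite graph G: it
consists of the paths (s, a, b, t) for the edges {a, b} of N with a ∈ A and b ∈ B. -/
def CorrespondsTo {V : Type} [Fintype V] [DecidableEq V] {G : SimpleGraph V}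
    {A B : Set V} {k : ℕ} (N : Finset (Sym2 V))
    (P : STLinkage (matchingGraph G A B) (Sum.inr false) (Sum.inr true) k) : Prop :=
  ∀ p : (matchingGraph G A B).Path (Sum.inr false) (Sum.inr true),
    p ∈ P.paths ↔ ∃ a b : V, a ∈ A ∧ b ∈ B ∧ s(a, b) ∈ N ∧
      (p : (matchingGraph G A B).Walk (Sum.inr false) (Sum.inr true)).support
        = [Sum.inr false, Sum.inl a, Sum.inl b, Sum.inr true]

namespace MTJ
set_option linter.unusedSectionVars false

open SimpleGraph

theorem walk_eq_of_support_eq {W : Type} {H : SimpleGraph W} {u v : W} :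
    ∀ (p q : H.Walk u v), p.support = q.support → p = q := by
  intro p
  induction p with
  | nil =>
    intro q h
    cases q with
    | nil => rfl
    | cons h' q => simp at h
  | @cons a w _ h' p ih =>
    intro q hh
    cases q with
    | nil => simp at hh
    | @cons _ w' _ h'' q =>
      rw [SimpleGraph.Walk.support_cons, SimpleGraph.Walk.support_cons] at hh
      have htl : p.support = q.support := by simpa using hh
      have hw : w = w' := by
        have := congrArg List.head? htl
        rw [p.support_eq_cons, q.support_eq_cons] at this
        simp only [List.head?_cons, Option.some.injEq] at this
        exact this
      subst hw
      rw [ih q htl]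

variable {V : Type} [Fintype V] [DecidableEq V] {G : SimpleGraph V} {A B : Set V}

lemma disj_notmem (hd : A ∩ B = ∅) {x : V} (hA : x ∈ A) (hB : x ∈ B) : False := by
  have : x ∈ A ∩ B := ⟨hA, hB⟩
  rw [hd] at this
  exact this

lemma adj_s {a : V} (ha : a ∈ A) :
    (matchingGraph G A B).Adj (Sum.inr false) (Sum.inl a) := Or.inl ⟨rfl, ha⟩

lemma adj_t {b : V} (hb : b ∈ B) :
    (matchingGraph G A B).Adj (Sum.inl b) (Sum.inr true) := Or.inr ⟨rfl, hb⟩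

def mkWalk {a b : V} (ha : a ∈ A) (hb : b ∈ B) (hab : G.Adj a b) :
    (matchingGraph G A B).Walk (Sum.inr false) (Sum.inr true) :=
  .cons (adj_s ha) (.cons (show (matchingGraph G A B).Adj (Sum.inl a) (Sum.inl b) from hab)
    (.cons (adj_t hb) .nil))

lemma mkWalk_support {a b : V} (ha : a ∈ A) (hb : b ∈ B) (hab : G.Adj a b) :
    (mkWalk ha hb hab).support = [Sum.inr false, Sum.inl a, Sum.inl b, Sum.inr true] := rfl

lemma mkWalk_isPath {a b : V} (ha : a ∈ A) (hb : b ∈ B) (hab : G.Adj a b) :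
    (mkWalk ha hb hab).IsPath := by
  rw [SimpleGraph.Walk.isPath_def, mkWalk_support]
  simp [hab.ne]

def mkPath {a b : V} (ha : a ∈ A) (hb : b ∈ B) (hab : G.Adj a b) :
    (matchingGraph G A B).Path (Sum.inr false) (Sum.inr true) :=
  ⟨mkWalk ha hb hab, mkWalk_isPath ha hb hab⟩

/-- `p` is the length-3 path through the edge `e`. -/
def Corr (e : Sym2 V) (p : (matchingGraph G A B).Path (Sum.inr false) (Sum.inr true)) : Prop :=
  ∃ a b : V, a ∈ A ∧ b ∈ B ∧ s(a, b) = e ∧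
    (p : (matchingGraph G A B).Walk (Sum.inr false) (Sum.inr true)).support
      = [Sum.inr false, Sum.inl a, Sum.inl b, Sum.inr true]

lemma corr_exists (hbip : ∀ u v : V, G.Adj u v → (u ∈ A ∧ v ∈ B) ∨ (u ∈ B ∧ v ∈ A))
    {e : Sym2 V} (he : e ∈ G.edgeSet) :
    ∃ p : (matchingGraph G A B).Path (Sum.inr false) (Sum.inr true), Corr e p := by
  induction e using Sym2.ind with
  | _ u v =>
    have hadj : G.Adj u v := he
    rcases hbip u v hadj with ⟨hu, hv⟩ | ⟨hu, hv⟩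
    · exact ⟨mkPath hu hv hadj, u, v, hu, hv, rfl, rfl⟩
    · exact ⟨mkPath hv hu hadj.symm, v, u, hv, hu, Sym2.eq_swap, rfl⟩

lemma corr_edge_unique {e e' : Sym2 V}
    {p : (matchingGraph G A B).Path (Sum.inr false) (Sum.inr true)}
    (h1 : Corr e p) (h2 : Corr e' p) : e = e' := by
  obtain ⟨a, b, _, _, he, hs⟩ := h1
  obtain ⟨a', b', _, _, he', hs'⟩ := h2
  rw [hs] at hs'
  simp only [List.cons.injEq, Sum.inl.injEq] at hs'
  rw [← he, ← he', hs'.2.1, hs'.2.2.1]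

lemma corr_path_unique (hd : A ∩ B = ∅) {e : Sym2 V}
    {p p' : (matchingGraph G A B).Path (Sum.inr false) (Sum.inr true)}
    (h1 : Corr e p) (h2 : Corr e p') : p = p' := by
  obtain ⟨a, b, ha, hb, he, hs⟩ := h1
  obtain ⟨a', b', ha', hb', he', hs'⟩ := h2
  rw [← he'] at he
  rcases Sym2.eq_iff.mp he with ⟨rfl, rfl⟩ | ⟨rfl, rfl⟩
  · exact Subtype.ext (walk_eq_of_support_eq _ _ (hs.trans hs'.symm))
  · exact absurd ha (fun ha => disj_notmem hd ha hb')


/-- The first edge of an s-t path: the path starts `s, a, b, ...` with `a ∈ A`, `b ∈ B`. -/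
def FirstEdge (p : (matchingGraph G A B).Path (Sum.inr false) (Sum.inr true))
    (e : Sym2 V) : Prop :=
  ∃ (a b : V) (L : List (V ⊕ Bool)), a ∈ A ∧ b ∈ B ∧ G.Adj a b ∧ s(a, b) = e ∧
    (p : (matchingGraph G A B).Walk (Sum.inr false) (Sum.inr true)).support
      = Sum.inr false :: Sum.inl a :: Sum.inl b :: L

lemma firstEdge_exists (hbip : ∀ u v : V, G.Adj u v → (u ∈ A ∧ v ∈ B) ∨ (u ∈ B ∧ v ∈ A))
    (hd : A ∩ B = ∅)
    (p : (matchingGraph G A B).Path (Sum.inr false) (Sum.inr true)) :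
    ∃ e, FirstEdge p e := by
  obtain ⟨w, hw⟩ := p
  cases w with
  | cons h w' =>
    rename_i y
    rcases y with a | c
    swap
    · exact h.elim
    have ha : a ∈ A := by
      rcases h with ⟨_, ha⟩ | ⟨hc, _⟩
      · exact ha
      · simp at hc
    cases w' with
    | cons h2 w'' =>
      rename_i z
      rcases z with b | c
      · have hab : G.Adj a b := h2
        have hb : b ∈ B := by
          rcases hbip a b hab with ⟨_, hb⟩ | ⟨haB, _⟩
          · exact hb
          · exact absurd haB (fun haB => disj_notmem hd ha haB)
        refine ⟨s(a, b), a, b, w''.support.tail, ha, hb, hab, rfl, ?_⟩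
        show (SimpleGraph.Walk.cons h (SimpleGraph.Walk.cons h2 w'')).support = _
        rw [SimpleGraph.Walk.support_cons, SimpleGraph.Walk.support_cons,
          w''.support_eq_cons]
        rfl
      · rcases h2 with ⟨hc, _⟩ | ⟨hc, haB⟩
        · subst hc
          have hnd := hw.support_nodup
          simp [SimpleGraph.Walk.support_cons] at hnd
          exact (hnd.1 (SimpleGraph.Walk.support_subset_support_cons _ _ w''.start_mem_support)).elim
        · exact absurd haB (fun haB => disj_notmem hd ha haB)

lemma firstEdge_unique {p : (matchingGraph G A B).Path (Sum.inr false) (Sum.inr true)}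
    {e e' : Sym2 V} (h1 : FirstEdge p e) (h2 : FirstEdge p e') : e = e' := by
  obtain ⟨a, b, L, _, _, _, he, hs⟩ := h1
  obtain ⟨a', b', L', _, _, _, he', hs'⟩ := h2
  rw [hs] at hs'
  simp only [List.cons.injEq, Sum.inl.injEq] at hs'
  rw [← he, ← he', hs'.2.1, hs'.2.2.1]

lemma Corr.firstEdge {e : Sym2 V}
    {p : (matchingGraph G A B).Path (Sum.inr false) (Sum.inr true)}
    (h : Corr e p) : FirstEdge p e := by
  obtain ⟨a, b, ha, hb, he, hs⟩ := h
  have hch := (p : (matchingGraph G A B).Walk (Sum.inr false) (Sum.inr true)).isChain_adj_support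
  rw [hs] at hch
  simp only [List.isChain_cons_cons] at hch
  exact ⟨a, b, [Sum.inr true], ha, hb, hch.2.1, he, hs⟩

lemma mem_of_firstEdge_left {p : (matchingGraph G A B).Path (Sum.inr false) (Sum.inr true)}
    {a b : V} {L} (hs : (p : (matchingGraph G A B).Walk (Sum.inr false) (Sum.inr true)).support
      = Sum.inr false :: Sum.inl a :: Sum.inl b :: L) :
    Sum.inl a ∈ (p : (matchingGraph G A B).Walk (Sum.inr false) (Sum.inr true)).support
      ∧ Sum.inl b ∈ (p : (matchingGraph G A B).Walk (Sum.inr false) (Sum.inr true)).support := by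
  rw [hs]; simp

/-- In a linkage, two paths with the same first edge are equal. -/
lemma firstEdge_inj (hd : A ∩ B = ∅) {k : ℕ}
    (Q : STLinkage (matchingGraph G A B) (Sum.inr false) (Sum.inr true) k)
    {p p' : (matchingGraph G A B).Path (Sum.inr false) (Sum.inr true)}
    (hp : p ∈ Q.paths) (hp' : p' ∈ Q.paths) {e : Sym2 V}
    (h1 : FirstEdge p e) (h2 : FirstEdge p' e) : p = p' := by
  obtain ⟨a, b, L, ha, hb, hab, he, hs⟩ := h1
  obtain ⟨a', b', L', ha', hb', hab', he', hs'⟩ := h2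
  rw [← he'] at he
  have haa : a = a' := by
    rcases Sym2.eq_iff.mp he with ⟨h, _⟩ | ⟨h, _⟩
    · exact h
    · exact absurd ha (fun ha => disj_notmem hd ha (h ▸ hb'))
  by_contra hne
  have := Q.disjoint p hp p' hp' hne (Sum.inl a)
    (mem_of_firstEdge_left hs).1 (haa ▸ (mem_of_firstEdge_left hs').1)
  rcases this with h | h <;> simp at h

section Constructions

variable (hbip : ∀ u v : V, G.Adj u v → (u ∈ A ∧ v ∈ B) ∨ (u ∈ B ∧ v ∈ A))
variable (hd : A ∩ B = ∅)

/-- The canonical path through an edge. -/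
noncomputable def pathOfEdge {e : Sym2 V} (he : e ∈ G.edgeSet) :
    (matchingGraph G A B).Path (Sum.inr false) (Sum.inr true) :=
  (corr_exists hbip he).choose

lemma pathOfEdge_corr {e : Sym2 V} (he : e ∈ G.edgeSet) :
    Corr e (pathOfEdge hbip he) :=
  (corr_exists hbip he).choose_spec

/-- The first edge of a path. -/
noncomputable def edgeOfPath (p : (matchingGraph G A B).Path (Sum.inr false) (Sum.inr true)) :
    Sym2 V :=
  (firstEdge_exists hbip hd p).choose

lemma edgeOfPath_spec (p : (matchingGraph G A B).Path (Sum.inr false) (Sum.inr true)) :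
    FirstEdge p (edgeOfPath hbip hd p) :=
  (firstEdge_exists hbip hd p).choose_spec

variable {k : ℕ}

/-- The matching associated with an arbitrary s-t linkage. -/
noncomputable def matchingOf
    (Q : STLinkage (matchingGraph G A B) (Sum.inr false) (Sum.inr true) k) :
    Finset (Sym2 V) :=
  Q.paths.image (edgeOfPath hbip hd)

lemma edgeOfPath_injOn (Q : STLinkage (matchingGraph G A B) (Sum.inr false) (Sum.inr true) k) :
    Set.InjOn (edgeOfPath hbip hd) Q.paths := by
  intro p hp p' hp' hpp
  exact firstEdge_inj hd Q hp hp' (edgeOfPath_spec hbip hd p)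
    (hpp ▸ edgeOfPath_spec hbip hd p')

lemma matchingOf_card (Q : STLinkage (matchingGraph G A B) (Sum.inr false) (Sum.inr true) k) :
    (matchingOf hbip hd Q).card = k := by
  rw [matchingOf, Finset.card_image_of_injOn (edgeOfPath_injOn hbip hd Q), Q.card_eq]

lemma matchingOf_isMatching
    (Q : STLinkage (matchingGraph G A B) (Sum.inr false) (Sum.inr true) k) :
    IsMatchingSet G (matchingOf hbip hd Q) := by
  constructor
  · intro e he
    obtain ⟨p, hp, rfl⟩ := Finset.mem_image.mp he
    obtain ⟨a, b, L, ha, hb, hab, he', hs⟩ := edgeOfPath_spec hbip hd p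
    rw [← he']
    exact hab
  · intro e he f hf hef v hve hvf
    obtain ⟨p, hp, rfl⟩ := Finset.mem_image.mp he
    obtain ⟨q, hq, rfl⟩ := Finset.mem_image.mp hf
    have hpq : p ≠ q := fun h => hef (h ▸ rfl)
    obtain ⟨a, b, L, ha, hb, hab, he', hs⟩ := edgeOfPath_spec hbip hd p
    obtain ⟨a', b', L', ha', hb', hab', hf', hs'⟩ := edgeOfPath_spec hbip hd q
    rw [← he'] at hve
    rw [← hf'] at hvf
    have hv1 : Sum.inl v ∈ (p : (matchingGraph G A B).Walk (Sum.inr false) (Sum.inr true)).support := by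
      rw [hs]
      rcases Sym2.mem_iff.mp hve with rfl | rfl <;> simp
    have hv2 : Sum.inl v ∈ (q : (matchingGraph G A B).Walk (Sum.inr false) (Sum.inr true)).support := by
      rw [hs']
      rcases Sym2.mem_iff.mp hvf with rfl | rfl <;> simp
    have := Q.disjoint p hp q hq hpq (Sum.inl v) hv1 hv2
    rcases this with h | h <;> simp at h

/-- For a linkage corresponding to a matching, `matchingOf` recovers the matching. -/
lemma matchingOf_eq {N : Finset (Sym2 V)} (hNk : N.card = k)
    {Q : STLinkage (matchingGraph G A B) (Sum.inr false) (Sum.inr true) k}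
    (hQ : CorrespondsTo N Q) : matchingOf hbip hd Q = N := by
  apply Finset.eq_of_subset_of_card_le
  · intro e he
    obtain ⟨p, hp, rfl⟩ := Finset.mem_image.mp he
    obtain ⟨a, b, ha, hb, hmem, hs⟩ := (hQ p).mp hp
    have hcorr : Corr s(a, b) p := ⟨a, b, ha, hb, rfl, hs⟩
    have := firstEdge_unique (edgeOfPath_spec hbip hd p) hcorr.firstEdge
    rw [this]
    exact hmem
  · rw [hNk, matchingOf_card]

end Constructions

section Main

variable (hbip : ∀ u v : V, G.Adj u v → (u ∈ A ∧ v ∈ B) ∨ (u ∈ B ∧ v ∈ A))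
variable (hd : A ∩ B = ∅) {k : ℕ}

lemma correspondsTo_mem {N : Finset (Sym2 V)}
    {P : STLinkage (matchingGraph G A B) (Sum.inr false) (Sum.inr true) k}
    (h : CorrespondsTo N P)
    (p : (matchingGraph G A B).Path (Sum.inr false) (Sum.inr true)) :
    p ∈ P.paths ↔ ∃ e ∈ N, Corr e p := by
  rw [h p]
  constructor
  · rintro ⟨a, b, ha, hb, hmem, hs⟩
    exact ⟨s(a, b), hmem, a, b, ha, hb, rfl, hs⟩
  · rintro ⟨e, hm, a, b, ha, hb, he, hs⟩
    exact ⟨a, b, ha, hb, he ▸ hm, hs⟩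

lemma stlinkage_ext {P Q : STLinkage (matchingGraph G A B) (Sum.inr false) (Sum.inr true) k}
    (h : P.paths = Q.paths) : P = Q := by
  cases P; cases Q
  simp only at h
  subst h
  rfl

lemma correspondsTo_unique {N : Finset (Sym2 V)}
    {P Q : STLinkage (matchingGraph G A B) (Sum.inr false) (Sum.inr true) k}
    (hP : CorrespondsTo N P) (hQ : CorrespondsTo N Q) : P = Q := by
  apply stlinkage_ext
  ext p
  rw [correspondsTo_mem hP, correspondsTo_mem hQ]

/-- The linkage associated with a matching. -/
noncomputable def linkageOf (N : Finset (Sym2 V)) (hN : IsMatchingSet G N)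
    (hNk : N.card = k) :
    STLinkage (matchingGraph G A B) (Sum.inr false) (Sum.inr true) k where
  paths := N.attach.image (fun e => pathOfEdge hbip (hN.1 e.1 e.2))
  card_eq := by
    rw [Finset.card_image_of_injOn, Finset.card_attach, hNk]
    intro e _ e' _ hee
    simp only at hee
    have c1 := pathOfEdge_corr hbip (hN.1 e.1 e.2)
    have c2 := pathOfEdge_corr hbip (hN.1 e'.1 e'.2)
    rw [hee] at c1
    exact Subtype.ext (corr_edge_unique c1 c2)
  disjoint := by
    intro p hp q hq hpq x hxp hxq
    obtain ⟨e, -, rfl⟩ := Finset.mem_image.mp hp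
    obtain ⟨f, -, rfl⟩ := Finset.mem_image.mp hq
    obtain ⟨a, b, ha, hb, he, hs⟩ := pathOfEdge_corr hbip (hN.1 e.1 e.2)
    obtain ⟨a', b', ha', hb', hf, hs'⟩ := pathOfEdge_corr hbip (hN.1 f.1 f.2)
    have hef : (e : Sym2 V) ≠ (f : Sym2 V) := by
      intro hh
      exact hpq (by obtain rfl := Subtype.ext hh; rfl)
    have key := hN.2 e.1 e.2 f.1 f.2 hef
    rw [hs] at hxp
    rw [hs'] at hxq
    simp only [List.mem_cons, List.not_mem_nil, or_false] at hxp hxq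
    rcases hxp with rfl | rfl | rfl | rfl
    · exact Or.inl rfl
    · exfalso
      have haE : a ∈ (e : Sym2 V) := he ▸ Sym2.mem_mk_left a b
      rcases hxq with h | h | h | h
      · exact Sum.inl_ne_inr h
      · obtain rfl := Sum.inl_injective h
        exact key a haE (hf ▸ Sym2.mem_mk_left a b')
      · obtain rfl := Sum.inl_injective h
        exact key a haE (hf ▸ Sym2.mem_mk_right a' a)
      · exact Sum.inl_ne_inr h
    · exfalso
      have hbE : b ∈ (e : Sym2 V) := he ▸ Sym2.mem_mk_right a b
      rcases hxq with h | h | h | h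
      · exact Sum.inl_ne_inr h
      · obtain rfl := Sum.inl_injective h
        exact key b hbE (hf ▸ Sym2.mem_mk_left b b')
      · obtain rfl := Sum.inl_injective h
        exact key b hbE (hf ▸ Sym2.mem_mk_right a' b)
      · exact Sum.inl_ne_inr h
    · exact Or.inr rfl

include hbip hd in
lemma linkageOf_corr (N : Finset (Sym2 V)) (hN : IsMatchingSet G N) (hNk : N.card = k) :
    CorrespondsTo N (linkageOf hbip N hN hNk) := by
  intro p
  constructor
  · intro hp
    obtain ⟨e, -, rfl⟩ := Finset.mem_image.mp hp
    obtain ⟨a, b, ha, hb, he, hs⟩ := pathOfEdge_corr hbip (hN.1 e.1 e.2)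
    exact ⟨a, b, ha, hb, he ▸ e.2, hs⟩
  · rintro ⟨a, b, ha, hb, hmem, hs⟩
    have hcorr : Corr s(a, b) p := ⟨a, b, ha, hb, rfl, hs⟩
    have hpe := pathOfEdge_corr hbip (hN.1 _ hmem)
    exact Finset.mem_image.mpr ⟨⟨s(a, b), hmem⟩, Finset.mem_attach _ _,
      corr_path_unique hd hpe hcorr⟩

include hbip hd in
lemma adjacent_of_tokenJump {N N' : Finset (Sym2 V)} (hstep : TokenJumpStep G k N N')
    {Q Q' : STLinkage (matchingGraph G A B) (Sum.inr false) (Sum.inr true) k}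
    (hQ : CorrespondsTo N Q) (hQ' : CorrespondsTo N' Q') : STLinkage.Adjacent Q Q' := by
  obtain ⟨hN, hN', hNk, hN'k, e, f, heN, hfN, hN'eq⟩ := hstep
  have hee : e ∈ G.edgeSet := hN.1 e heN
  have hfe : f ∈ G.edgeSet := hN'.1 f (hN'eq ▸ Finset.mem_insert_self f _)
  have hcp : Corr e (pathOfEdge hbip hee) := pathOfEdge_corr hbip hee
  have hcq : Corr f (pathOfEdge hbip hfe) := pathOfEdge_corr hbip hfe
  set p := pathOfEdge hbip hee with hpdef
  set q := pathOfEdge hbip hfe with hqdef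
  refine ⟨p, q, (correspondsTo_mem hQ p).mpr ⟨e, heN, hcp⟩, ?_, ?_⟩
  · intro hqq
    obtain ⟨e₀, he₀, hc₀⟩ := (correspondsTo_mem hQ q).mp hqq
    exact hfN (corr_edge_unique hcq hc₀ ▸ he₀)
  · ext r
    rw [correspondsTo_mem hQ' r]
    constructor
    · rintro ⟨e₀, he₀, hc₀⟩
      rw [hN'eq] at he₀
      rcases Finset.mem_insert.mp he₀ with rfl | he₀
      · exact Finset.mem_insert.mpr (Or.inl (corr_path_unique hd hc₀ hcq))
      · obtain ⟨hne, he₀N⟩ := Finset.mem_erase.mp he₀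
        refine Finset.mem_insert.mpr (Or.inr (Finset.mem_erase.mpr
          ⟨?_, (correspondsTo_mem hQ r).mpr ⟨e₀, he₀N, hc₀⟩⟩))
        intro hrp
        rw [hrp] at hc₀
        exact hne (corr_edge_unique hc₀ hcp)
    · intro hr
      rcases Finset.mem_insert.mp hr with rfl | hr
      · exact ⟨f, hN'eq ▸ Finset.mem_insert_self f _, hcq⟩
      · obtain ⟨hrp, hrQ⟩ := Finset.mem_erase.mp hr
        obtain ⟨e₀, he₀, hc₀⟩ := (correspondsTo_mem hQ r).mp hrQ
        refine ⟨e₀, ?_, hc₀⟩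
        rw [hN'eq]
        refine Finset.mem_insert_of_mem (Finset.mem_erase.mpr ⟨?_, he₀⟩)
        rintro rfl
        exact hrp (corr_path_unique hd hc₀ hcp)

include hbip hd in
lemma tokenJump_of_adjacent
    {Q Q' : STLinkage (matchingGraph G A B) (Sum.inr false) (Sum.inr true) k}
    (hadj : STLinkage.Adjacent Q Q') :
    matchingOf hbip hd Q = matchingOf hbip hd Q' ∨
      TokenJumpStep G k (matchingOf hbip hd Q) (matchingOf hbip hd Q') := by
  obtain ⟨p, q, hp, hq, heq⟩ := hadj
  set e := edgeOfPath hbip hd p with hedef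
  set f := edgeOfPath hbip hd q with hfdef
  have himg : matchingOf hbip hd Q' = insert f ((matchingOf hbip hd Q).erase e) := by
    unfold matchingOf
    rw [heq, Finset.image_insert]
    congr 1
    ext x
    simp only [Finset.mem_image, Finset.mem_erase]
    constructor
    · rintro ⟨r, ⟨hrp, hrQ⟩, rfl⟩
      exact ⟨fun h => hrp (edgeOfPath_injOn hbip hd Q hrQ hp h), r, hrQ, rfl⟩
    · rintro ⟨hxe, r, hrQ, rfl⟩
      exact ⟨r, ⟨fun h => hxe (by rw [h]), hrQ⟩, rfl⟩
  by_cases hf : f ∈ matchingOf hbip hd Q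
  · left
    obtain ⟨p₀, hp₀, hfp₀⟩ := Finset.mem_image.mp hf
    have hp₀p : p₀ = p := by
      by_contra hne
      have hp₀Q' : p₀ ∈ Q'.paths :=
        heq ▸ Finset.mem_insert_of_mem (Finset.mem_erase.mpr ⟨hne, hp₀⟩)
      have hqQ' : q ∈ Q'.paths := heq ▸ Finset.mem_insert_self q _
      have hq0 : q = p₀ := edgeOfPath_injOn hbip hd Q' hqQ' hp₀Q' (by rw [hfp₀])
      exact hq (hq0 ▸ hp₀)
    have hfe2 : f = e := by rw [← hfp₀, hp₀p]
    rw [himg, hfe2]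
    exact (Finset.insert_erase (Finset.mem_image_of_mem _ hp)).symm
  · right
    exact ⟨matchingOf_isMatching hbip hd Q, matchingOf_isMatching hbip hd Q',
      matchingOf_card hbip hd Q, matchingOf_card hbip hd Q',
      e, f, Finset.mem_image_of_mem _ hp, hf, himg⟩

end Main

end MTJ

/-- Matching reconfiguration under token jumping in a bipartite graph corresponds to
Disjoint s-t Paths Reconfiguration: M can be transformed into M' by token jumps iff the
associated s-t linkage of M is reconfigurable to that of M' in the auxiliary graph. -/
theorem matching_token_jump_iff_st_linkage_reconfigurable
    {V : Type} [Fintype V] [DecidableEq V] (G : SimpleGraph V) (A B : Set V)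
    (hcover : A ∪ B = Set.univ) (hdisjAB : A ∩ B = ∅)
    (hbip : ∀ u v : V, G.Adj u v → (u ∈ A ∧ v ∈ B) ∨ (u ∈ B ∧ v ∈ A))
    {k : ℕ} (M M' : Finset (Sym2 V))
    (hM : IsMatchingSet G M) (hM' : IsMatchingSet G M')
    (hMk : M.card = k) (hM'k : M'.card = k)
    (P P' : STLinkage (matchingGraph G A B) (Sum.inr false) (Sum.inr true) k)
    (hP : CorrespondsTo M P) (hP' : CorrespondsTo M' P') :
    Relation.ReflTransGen (TokenJumpStep G k) M M' ↔ P.Reconfigurable P' := by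
  constructor
  · intro h
    suffices H : ∀ N' : Finset (Sym2 V), Relation.ReflTransGen (TokenJumpStep G k) M N' →
        ∀ Q' : STLinkage (matchingGraph G A B) (Sum.inr false) (Sum.inr true) k,
          CorrespondsTo N' Q' → P.Reconfigurable Q' by
      exact H M' h P' hP'
    intro N' h
    induction h with
    | refl =>
      intro Q' hQ'
      rw [MTJ.correspondsTo_unique hP hQ']
      exact Relation.ReflTransGen.refl
    | @tail b c hMb hbc ih =>
      intro Q' hQ'
      have hQb := MTJ.linkageOf_corr hbip hdisjAB b hbc.1 hbc.2.2.1
      exact Relation.ReflTransGen.tail (ih _ hQb)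
        (MTJ.adjacent_of_tokenJump hbip hdisjAB hbc hQb hQ')
  · intro h
    have key : ∀ Q' : STLinkage (matchingGraph G A B) (Sum.inr false) (Sum.inr true) k,
        P.Reconfigurable Q' →
        Relation.ReflTransGen (TokenJumpStep G k) (MTJ.matchingOf hbip hdisjAB P)
          (MTJ.matchingOf hbip hdisjAB Q') := by
      intro Q' h
      induction h with
      | refl => exact Relation.ReflTransGen.refl
      | @tail b c hPb hbc ih =>
        rcases MTJ.tokenJump_of_adjacent hbip hdisjAB hbc with heq | hstep
        · rw [← heq]; exact ih
        · exact ih.tail hstep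
    have h2 := key P' h
    rwa [MTJ.matchingOf_eq hbip hdisjAB hMk hP, MTJ.matchingOf_eq hbip hdisjAB hM'k hP'] at h2
end
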